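/- arXiv:2406.10122 — 3 statements merged into one kernel-verified Lean document; each statement's English description precedes it below -/
import Mathlib

section
/- Let n ≥ 2. An invertible upper triangular n×n complex matrix g stabilizes the flag E* = (e_n ⊂ e_1 ⊂ e_2 ⊂ ⋯ ⊂ e_{n-1}) (i.e., maps each of its subspaces to itself) if and only if g = z·b for some nonzero scalar z ∈ ℂ* and some b ∈ B_{n-1}. Equivalently, B ∩ B* = Z·B_{n-1}, where Z is the centre of GL(n,ℂ). -/
/-
Common setup.  The ambient space is `ℂ^(n+1)` (so the paper's `n` is our `n + 1`,
and the paper's hypothesis `n ≥ 2` becomes `1 ≤ n`).  Coordinates are indexed by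
`Fin (n+1)`, zero-indexed, so the paper's index `i ∈ {1, …, n}` is our `i - 1`,
and the paper's `e_n` is `e (Fin.last n)`.
-/

noncomputable section

namespace ShareshianPairs

/-- The standard basis vector `e i` of `ℂ^(n+1)`. -/
def e (n : ℕ) (i : Fin (n + 1)) : Fin (n + 1) → ℂ := Pi.single i 1

/-- The hat vector `ê j = e j + e n`. -/
def hatE (n : ℕ) (j : Fin (n + 1)) : Fin (n + 1) → ℂ := e n j + e n (Fin.last n)

/-- The flag `(v 0 ⊂ v 1 ⊂ ⋯)` spanned by a sequence of vectors. -/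
def flagOf (n : ℕ) (v : Fin (n + 1) → Fin (n + 1) → ℂ) :
    Fin (n + 1) → Submodule ℂ (Fin (n + 1) → ℂ) :=
  fun i => Submodule.span ℂ (v '' {j | j ≤ i})

/-- A full flag in `ℂ^(n+1)`. -/
def IsFlag (n : ℕ) (V : Fin (n + 1) → Submodule ℂ (Fin (n + 1) → ℂ)) : Prop :=
  Monotone V ∧ ∀ i : Fin (n + 1), Module.finrank ℂ (V i) = (i : ℕ) + 1

/-- The action of `GL(n+1, ℂ)` on flags. -/
def actFlag (n : ℕ) (g : Matrix.GeneralLinearGroup (Fin (n + 1)) ℂ)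
    (V : Fin (n + 1) → Submodule ℂ (Fin (n + 1) → ℂ)) :
    Fin (n + 1) → Submodule ℂ (Fin (n + 1) → ℂ) :=
  fun i => (V i).map (Matrix.mulVecLin (g : Matrix (Fin (n + 1)) (Fin (n + 1)) ℂ))

/-- Membership in the Borel subgroup `B` of invertible upper triangular matrices. -/
def InB (n : ℕ) (g : Matrix.GeneralLinearGroup (Fin (n + 1)) ℂ) : Prop :=
  ∀ i j : Fin (n + 1), j < i → (g : Matrix (Fin (n + 1)) (Fin (n + 1)) ℂ) i j = 0

/-- Membership in `B_{n-1} ⊂ B` : upper triangular, last diagonal entry `1`,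
remaining last-column entries `0`. -/
def InBsmall (n : ℕ) (g : Matrix.GeneralLinearGroup (Fin (n + 1)) ℂ) : Prop :=
  InB n g ∧
    (g : Matrix (Fin (n + 1)) (Fin (n + 1)) ℂ) (Fin.last n) (Fin.last n) = 1 ∧
    ∀ i : Fin (n + 1), i ≠ Fin.last n →
      (g : Matrix (Fin (n + 1)) (Fin (n + 1)) ℂ) i (Fin.last n) = 0

/-- The spanning vectors of the flag `E* = (e_n ⊂ e_1 ⊂ ⋯ ⊂ e_{n-1})`. -/
def eStarVec (n : ℕ) : Fin (n + 1) → Fin (n + 1) → ℂ :=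
  fun i => Fin.cases (e n (Fin.last n)) (fun j => e n j.castSucc) i

/-- Membership in `B*`, the stabilizer of the flag `E*`. -/
def InBstar (n : ℕ) (g : Matrix.GeneralLinearGroup (Fin (n + 1)) ℂ) : Prop :=
  actFlag n g (flagOf n (eStarVec n)) = flagOf n (eStarVec n)

/-- Membership in `H`, the invertible diagonal matrices. -/
def InH (n : ℕ) (g : Matrix.GeneralLinearGroup (Fin (n + 1)) ℂ) : Prop :=
  ∀ i j : Fin (n + 1), i ≠ j → (g : Matrix (Fin (n + 1)) (Fin (n + 1)) ℂ) i j = 0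

/-- The orbit of a flag under the subgroup `{g | P g}`. -/
def orbit (n : ℕ) (P : Matrix.GeneralLinearGroup (Fin (n + 1)) ℂ → Prop)
    (V : Fin (n + 1) → Submodule ℂ (Fin (n + 1) → ℂ)) :
    Set (Fin (n + 1) → Submodule ℂ (Fin (n + 1) → ℂ)) :=
  {W | ∃ g : Matrix.GeneralLinearGroup (Fin (n + 1)) ℂ, P g ∧ W = actFlag n g V}

/-- A sequence of spanning vectors is in standard form. -/
def IsStdForm (n : ℕ) (v : Fin (n + 1) → Fin (n + 1) → ℂ) : Prop :=
  LinearIndependent ℂ v ∧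
  (∀ i, (∃ j, v i = e n j) ∨ (∃ j, j ≠ Fin.last n ∧ v i = hatE n j)) ∧
  (∃ i, v i = e n (Fin.last n)) ∧
  (∀ i k : Fin (n + 1), v i = e n (Fin.last n) → i < k → ∃ j, v k = e n j) ∧
  (∀ i k ji jk : Fin (n + 1), i < k → ji ≠ Fin.last n → jk ≠ Fin.last n →
    v i = hatE n ji → v k = hatE n jk → jk < ji)

/-- `vs` spans the flag `F*` : each hat vector `ê j` of `v` is replaced by `e j`,
all other entries are unchanged. -/
def StarPair (n : ℕ) (v vs : Fin (n + 1) → Fin (n + 1) → ℂ) : Prop :=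
  ∀ q : Fin (n + 1),
    ((∃ t, v q = e n t) → vs q = v q) ∧
    (∀ j : Fin (n + 1), j ≠ Fin.last n → v q = hatE n j → vs q = e n j)

/-- `vt` spans the flag `F̃` attached to the standard-form flag spanned by `v`. -/
def TildePair (n : ℕ) (v vt : Fin (n + 1) → Fin (n + 1) → ℂ) : Prop :=
  ((∀ q, ∃ t, v q = e n t) ∧ vt = v) ∨
  (∃ (k : ℕ) (hk : 0 < k) (i j : Fin k → Fin (n + 1)) (p : Fin (n + 1)),
    StrictAnti i ∧ StrictMono j ∧
    (∀ m : Fin k, j m ≠ Fin.last n ∧ v (i m) = hatE n (j m)) ∧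
    v p = e n (Fin.last n) ∧
    (∀ q : Fin (n + 1), (∀ m : Fin k, q ≠ i m) → ∃ t, v q = e n t) ∧
    vt (i ⟨k - 1, Nat.sub_lt hk Nat.one_pos⟩) = e n (Fin.last n) ∧
    (∀ (m : Fin k) (h : (m : ℕ) + 1 < k), vt (i m) = e n (j ⟨(m : ℕ) + 1, h⟩)) ∧
    vt p = e n (j ⟨0, hk⟩) ∧
    (∀ q : Fin (n + 1), (∀ m : Fin k, q ≠ i m) → q ≠ p → vt q = v q))

/-- The `(n+1)`-cycle `σ`, zero-indexed version of the paper's `σ = (n, n-1, …, 1)`: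
`σ 0 = n` and `σ k = k - 1` for `k ≥ 1`. -/
def sigma (n : ℕ) : Equiv.Perm (Fin (n + 1)) := (finRotate (n + 1))⁻¹

/-- The cycle `τ_Δ = (n, j_k, …, j_2, j_1)` attached to a subset
`Δ = {j_1 < ⋯ < j_k < n} ∪ {n}`:  it sends each element of `Δ` to the next
smaller element (the smallest going back to the largest) and fixes everything else. -/
def tauDelta (n : ℕ) (Δ : Finset (Fin (n + 1))) : Equiv.Perm (Fin (n + 1)) :=
  ((Δ.sort (· ≤ ·)).formPerm)⁻¹

/-- `Δ` is a decreasing sequence for `w⁻¹`. -/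
def IsDecreasingFor (n : ℕ) (Δ : Finset (Fin (n + 1)))
    (w : Equiv.Perm (Fin (n + 1))) : Prop :=
  ∀ x ∈ Δ, ∀ y ∈ Δ, x < y → w⁻¹ y < w⁻¹ x

/-- The spanning vectors of the flag `y(E*)`. -/
def eStarPermVec (n : ℕ) (y : Equiv.Perm (Fin (n + 1))) :
    Fin (n + 1) → Fin (n + 1) → ℂ :=
  fun i => Fin.cases (e n (y (Fin.last n))) (fun t => e n (y t.castSucc)) i

/-- Coxeter length = number of inversions. -/
def len (n : ℕ) (w : Equiv.Perm (Fin (n + 1))) : ℕ :=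
  (Finset.univ.filter
    (fun p : Fin (n + 1) × Fin (n + 1) => p.1 < p.2 ∧ w p.2 < w p.1)).card

/-- Length with respect to the set of simple reflections `S*`. -/
def lenStar (n : ℕ) (x : Equiv.Perm (Fin (n + 1))) : ℕ :=
  len n ((sigma n)⁻¹ * x * sigma n)

/-- Bruhat order on the symmetric group (tableau criterion):
`y ≤ w` iff `#{i ≤ p : y i ≤ q} ≥ #{i ≤ p : w i ≤ q}` for all `p, q`. -/
def bruhatLE (n : ℕ) (y w : Equiv.Perm (Fin (n + 1))) : Prop :=
  ∀ p q : Fin (n + 1),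
    (Finset.univ.filter (fun i => i ≤ p ∧ w i ≤ q)).card ≤
      (Finset.univ.filter (fun i => i ≤ p ∧ y i ≤ q)).card

/-- The total order `n ≺ 1 ≺ 2 ≺ ⋯ ≺ n - 1` (zero-indexed). -/
def precOrd (n : ℕ) (a b : Fin (n + 1)) : Prop :=
  finRotate (n + 1) a < finRotate (n + 1) b

/-- `(w, u*)` is a Shareshian pair. -/
def IsShPair (n : ℕ) (w u : Equiv.Perm (Fin (n + 1))) : Prop :=
  ∃ Δ : Finset (Fin (n + 1)), Fin.last n ∈ Δ ∧ IsDecreasingFor n Δ w ∧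
    u = tauDelta n Δ * w * (sigma n)⁻¹

/-- The matrix whose `i`-th column is `v i`. -/
def colMat (n : ℕ) (v : Fin (n + 1) → Fin (n + 1) → ℂ) :
    Matrix (Fin (n + 1)) (Fin (n + 1)) ℂ :=
  Matrix.of fun r c => v c r

/-- The double coset `{b₁ * g * b₂ | P b₁, Q b₂}` as a set of matrices. -/
def dblCoset (n : ℕ) (P Q : Matrix.GeneralLinearGroup (Fin (n + 1)) ℂ → Prop)
    (g : Matrix (Fin (n + 1)) (Fin (n + 1)) ℂ) :
    Set (Matrix (Fin (n + 1)) (Fin (n + 1)) ℂ) :=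
  {x | ∃ b₁ b₂ : Matrix.GeneralLinearGroup (Fin (n + 1)) ℂ, P b₁ ∧ Q b₂ ∧
    x = (b₁ : Matrix (Fin (n + 1)) (Fin (n + 1)) ℂ) * g *
      (b₂ : Matrix (Fin (n + 1)) (Fin (n + 1)) ℂ)}

/-- The coordinate subspace `E_q = span {e_1, …, e_q}`. -/
def Esub (n : ℕ) (q : ℕ) : Submodule ℂ (Fin (n + 1) → ℂ) :=
  Submodule.span ℂ (e n '' {t : Fin (n + 1) | (t : ℕ) < q})

/-- The line `L = ℂ e_n`. -/
def Lline (n : ℕ) : Submodule ℂ (Fin (n + 1) → ℂ) :=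
  Submodule.span ℂ {e n (Fin.last n)}

/-! ### Auxiliary lemmas for statement0 -/

lemma mem_span_e {n : ℕ} (S : Set (Fin (n + 1))) (x : Fin (n + 1) → ℂ) :
    x ∈ Submodule.span ℂ (e n '' S) ↔ ∀ t ∉ S, x t = 0 := by
  constructor
  · intro hx t ht
    have hle : Submodule.span ℂ (e n '' S) ≤ Submodule.pi Sᶜ (fun _ => ⊥) := by
      rw [Submodule.span_le]
      rintro _ ⟨j, hj, rfl⟩
      intro t' ht'
      simp only [Submodule.mem_bot]
      have hne : t' ≠ j := fun h => ht' (by rw [h]; exact hj)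
      exact Pi.single_eq_of_ne hne 1
    have := hle hx
    rw [Submodule.mem_pi] at this
    simpa using this t ht
  · intro hx
    have hsum : x = ∑ t : Fin (n + 1), Pi.single t (x t) := (Finset.univ_sum_single x).symm
    rw [hsum]
    refine Submodule.sum_mem _ (fun t _ => ?_)
    by_cases ht : t ∈ S
    · have h1 : Pi.single t (x t) = (x t) • e n t := by
        unfold e; ext s
        rcases eq_or_ne s t with rfl | h
        · simp
        · simp [Pi.single_eq_of_ne h]
      rw [h1]
      exact Submodule.smul_mem _ _ (Submodule.subset_span ⟨t, ht, rfl⟩)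
    · rw [hx t ht]; simp

/-- The index set of the flag `E*` at level `i`. -/
def Dset (n : ℕ) (i : Fin (n + 1)) : Set (Fin (n + 1)) :=
  {t | (t : ℕ) < (i : ℕ)} ∪ {Fin.last n}

lemma eStarVec_image (n : ℕ) (i : Fin (n + 1)) :
    eStarVec n '' {j | j ≤ i} = e n '' Dset n i := by
  ext x
  constructor
  · rintro ⟨j, hj, rfl⟩
    induction j using Fin.cases with
    | zero => exact ⟨Fin.last n, Or.inr rfl, rfl⟩
    | succ t =>
      have h1 : (t : ℕ) + 1 ≤ (i : ℕ) := by
        have := Fin.le_def.mp hj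
        simpa using this
      refine ⟨t.castSucc, Or.inl ?_, by simp [eStarVec]⟩
      show ((t.castSucc : Fin (n + 1)) : ℕ) < (i : ℕ)
      simp only [Fin.coe_castSucc]
      omega
  · rintro ⟨s, hs, rfl⟩
    rcases hs with hs | hs
    · have hsn : (s : ℕ) < n := lt_of_lt_of_le hs (Nat.lt_succ_iff.mp i.isLt)
      refine ⟨Fin.succ ⟨(s : ℕ), hsn⟩, ?_, ?_⟩
      · show Fin.succ _ ≤ i
        rw [Fin.le_def]; simpa using hs
      · simp only [eStarVec, Fin.cases_succ]
        exact congrArg (e n) (Fin.ext (by simp))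
    · rw [Set.mem_singleton_iff] at hs
      subst hs
      exact ⟨0, Fin.zero_le i, by simp [eStarVec]⟩

lemma mem_flag_iff (n : ℕ) (i : Fin (n + 1)) (x : Fin (n + 1) → ℂ) :
    x ∈ flagOf n (eStarVec n) i ↔
      ∀ t : Fin (n + 1), t ≠ Fin.last n → (i : ℕ) ≤ (t : ℕ) → x t = 0 := by
  show x ∈ Submodule.span ℂ (eStarVec n '' {j | j ≤ i}) ↔ _
  rw [eStarVec_image, mem_span_e]
  constructor
  · intro h t htl hti
    refine h t ?_
    simp only [Dset, Set.mem_union, Set.mem_setOf_eq, Set.mem_singleton_iff, not_or]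
    exact ⟨not_lt.mpr hti, htl⟩
  · intro h t ht
    simp only [Dset, Set.mem_union, Set.mem_setOf_eq, Set.mem_singleton_iff, not_or] at ht
    exact h t ht.2 (not_lt.1 ht.1)

/-- `g` as a linear equivalence. -/
def gEquiv (n : ℕ) (g : Matrix.GeneralLinearGroup (Fin (n + 1)) ℂ) :
    (Fin (n + 1) → ℂ) ≃ₗ[ℂ] (Fin (n + 1) → ℂ) :=
  LinearEquiv.ofLinear
    (Matrix.mulVecLin (g : Matrix (Fin (n + 1)) (Fin (n + 1)) ℂ))
    (Matrix.mulVecLin ((g⁻¹ : Matrix.GeneralLinearGroup (Fin (n + 1)) ℂ) :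
      Matrix (Fin (n + 1)) (Fin (n + 1)) ℂ))
    (by rw [← Matrix.mulVecLin_mul, Units.mul_inv, Matrix.mulVecLin_one])
    (by rw [← Matrix.mulVecLin_mul, Units.inv_mul, Matrix.mulVecLin_one])

lemma map_eq_of_le (n : ℕ) (g : Matrix.GeneralLinearGroup (Fin (n + 1)) ℂ)
    (V : Submodule ℂ (Fin (n + 1) → ℂ))
    (h : V.map (Matrix.mulVecLin (g : Matrix (Fin (n + 1)) (Fin (n + 1)) ℂ)) ≤ V) :
    V.map (Matrix.mulVecLin (g : Matrix (Fin (n + 1)) (Fin (n + 1)) ℂ)) = V := by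
  apply Submodule.eq_of_le_of_finrank_le h
  have := LinearEquiv.finrank_map_eq (gEquiv n g) V
  exact this.ge

lemma mulVecLin_e (n : ℕ) (g : Matrix (Fin (n + 1)) (Fin (n + 1)) ℂ) (s t : Fin (n + 1)) :
    Matrix.mulVecLin g (e n s) t = g t s := by
  simp [e, Matrix.mulVecLin_apply]

lemma inBstar_of (n : ℕ) (g : Matrix.GeneralLinearGroup (Fin (n + 1)) ℂ) (hg : InB n g)
    (hc : ∀ t : Fin (n + 1), t ≠ Fin.last n →
      (g : Matrix (Fin (n + 1)) (Fin (n + 1)) ℂ) t (Fin.last n) = 0) :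
    InBstar n g := by
  unfold InBstar actFlag
  funext i
  apply map_eq_of_le
  have hmap : (flagOf n (eStarVec n) i).map
      (Matrix.mulVecLin (g : Matrix (Fin (n + 1)) (Fin (n + 1)) ℂ))
      = Submodule.span ℂ ((Matrix.mulVecLin (g : Matrix (Fin (n + 1)) (Fin (n + 1)) ℂ)) ''
        (eStarVec n '' {j | j ≤ i})) := Submodule.map_span _ _
  rw [hmap, eStarVec_image, Submodule.span_le]
  rintro _ ⟨_, ⟨s, hs, rfl⟩, rfl⟩
  rw [SetLike.mem_coe, mem_flag_iff]
  intro t htl hti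
  rw [mulVecLin_e]
  rcases hs with hs | hs
  · exact hg t s (Fin.lt_def.mpr (lt_of_lt_of_le hs hti))
  · rw [Set.mem_singleton_iff] at hs
    subst hs
    exact hc t htl

lemma col_of_inBstar (n : ℕ) (g : Matrix.GeneralLinearGroup (Fin (n + 1)) ℂ)
    (h : InBstar n g) :
    ∀ t : Fin (n + 1), t ≠ Fin.last n →
      (g : Matrix (Fin (n + 1)) (Fin (n + 1)) ℂ) t (Fin.last n) = 0 := by
  intro t htl
  have h0 := congrFun h 0
  have he : e n (Fin.last n) ∈ flagOf n (eStarVec n) 0 := by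
    rw [mem_flag_iff]
    intro t' ht' _
    exact Pi.single_eq_of_ne ht' 1
  have hm : Matrix.mulVecLin (g : Matrix (Fin (n + 1)) (Fin (n + 1)) ℂ) (e n (Fin.last n))
      ∈ flagOf n (eStarVec n) 0 := by
    rw [← h0]
    exact Submodule.mem_map_of_mem he
  rw [mem_flag_iff] at hm
  have := hm t htl (by simp)
  rwa [mulVecLin_e] at this

/-- an invertible upper triangular matrix stabilizes the flag `E*`
iff it is a nonzero scalar multiple of an element of `B_{n-1}`;
equivalently `B ∩ B* = Z · B_{n-1}`. -/
theorem statement0 (n : ℕ) (hn : 1 ≤ n)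
    (g : Matrix.GeneralLinearGroup (Fin (n + 1)) ℂ) (hg : InB n g) :
    InBstar n g ↔
      ∃ (z : ℂ) (b : Matrix.GeneralLinearGroup (Fin (n + 1)) ℂ),
        z ≠ 0 ∧ InBsmall n b ∧
        (g : Matrix (Fin (n + 1)) (Fin (n + 1)) ℂ) =
          z • (b : Matrix (Fin (n + 1)) (Fin (n + 1)) ℂ) := by
  constructor
  · intro h
    have hc := col_of_inBstar n g h
    set A : Matrix (Fin (n + 1)) (Fin (n + 1)) ℂ := (g : Matrix (Fin (n + 1)) (Fin (n + 1)) ℂ)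
      with hA
    have hdet : A.det ≠ 0 := by
      have hu : IsUnit A := g.isUnit
      exact ((Matrix.isUnit_iff_isUnit_det A).mp hu).ne_zero
    have hprod : A.det = ∏ i, A i i :=
      Matrix.det_of_upperTriangular (fun i j hij => hg i j hij)
    set z := A (Fin.last n) (Fin.last n) with hzdef
    have hz : z ≠ 0 := by
      intro h0
      exact hdet (by rw [hprod]; exact Finset.prod_eq_zero (Finset.mem_univ _) h0)
    refine ⟨z, ⟨z⁻¹ • A, z • ((g⁻¹ : Matrix.GeneralLinearGroup (Fin (n + 1)) ℂ) :
        Matrix (Fin (n + 1)) (Fin (n + 1)) ℂ), ?_, ?_⟩, hz, ⟨?_, ?_, ?_⟩, ?_⟩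
    · rw [smul_mul_assoc, mul_smul_comm, smul_smul, inv_mul_cancel₀ hz, one_smul]
      exact g.mul_inv
    · rw [smul_mul_assoc, mul_smul_comm, smul_smul, mul_inv_cancel₀ hz, one_smul]
      exact g.inv_mul
    · intro i j hij
      show (z⁻¹ • A) i j = 0
      rw [Matrix.smul_apply, hA, hg i j hij, smul_zero]
    · show (z⁻¹ • A) (Fin.last n) (Fin.last n) = 1
      rw [Matrix.smul_apply, ← hzdef, smul_eq_mul, inv_mul_cancel₀ hz]
    · intro i hi
      show (z⁻¹ • A) i (Fin.last n) = 0
      rw [Matrix.smul_apply, hc i hi, smul_zero]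
    · show A = z • (z⁻¹ • A)
      rw [smul_smul, mul_inv_cancel₀ hz, one_smul]
  · rintro ⟨z, b, hz, ⟨hbB, hbd, hbc⟩, heq⟩
    apply inBstar_of n g hg
    intro t ht
    rw [heq, Matrix.smul_apply, hbc t ht, smul_zero]

end ShareshianPairs
end
end

section
/- Let F = (v_1 ⊂ ⋯ ⊂ v_n) be a flag in standard form in ℂ^n containing hat vectors, with hat vectors v_{i_m} = ê_{j_m} at positions i_k < i_{k-1} < ⋯ < i_1 (so j_k > ⋯ > j_1) and v_p = e_n, all other v_m being standard basis vectors. Let F* be the flag obtained from F by replacing each hat vector ê_{j_m} by the standard basis vector e_{j_m}, leaving all other entries unchanged. Then F* ∈ B*·F, F* is fixed by every invertible diagonal matrix, and F* is the unique flag in B*·F fixed by all of H. -/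
/-
Common setup.  The ambient space is `ℂ^(n+1)` (so the paper's `n` is our `n + 1`,
and the paper's hypothesis `n ≥ 2` becomes `1 ≤ n`).  Coordinates are indexed by
`Fin (n+1)`, zero-indexed, so the paper's index `i ∈ {1, …, n}` is our `i - 1`,
and the paper's `e_n` is `e (Fin.last n)`.
-/

noncomputable section

namespace ShareshianPairs

open Matrix Submodule Module

lemma e_inj (n : ℕ) : Function.Injective (e n) := by
  intro a b h
  by_contra hne
  have := congrFun h a
  simp [e, Pi.single_apply, hne] at this

lemma e_li (n : ℕ) : LinearIndependent ℂ (e n) := by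
  have := (Pi.basisFun ℂ (Fin (n+1))).linearIndependent
  convert this using 1
  funext i
  simp [e, Pi.basisFun_apply]

/- ### diagonal matrices -/

lemma diag_of_InH {n : ℕ} {h : Matrix.GeneralLinearGroup (Fin (n + 1)) ℂ} (hh : InH n h) :
    (h : Matrix (Fin (n + 1)) (Fin (n + 1)) ℂ) =
      Matrix.diagonal (fun t => (h : Matrix (Fin (n + 1)) (Fin (n + 1)) ℂ) t t) := by
  ext r c
  by_cases hrc : r = c
  · subst hrc; simp
  · simp [Matrix.diagonal_apply_ne _ hrc, hh r c hrc]

lemma diagEntries_ne_zero {n : ℕ} {h : Matrix.GeneralLinearGroup (Fin (n + 1)) ℂ}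
    (hh : InH n h) (t : Fin (n + 1)) :
    (h : Matrix (Fin (n + 1)) (Fin (n + 1)) ℂ) t t ≠ 0 := by
  intro h0
  have hu : IsUnit (h : Matrix (Fin (n + 1)) (Fin (n + 1)) ℂ) := ⟨h, rfl⟩
  rw [Matrix.isUnit_iff_isUnit_det] at hu
  rw [diag_of_InH hh, Matrix.det_diagonal] at hu
  exact hu.ne_zero (Finset.prod_eq_zero (Finset.mem_univ t) h0)

lemma mulVecLin_InH_e {n : ℕ} {h : Matrix.GeneralLinearGroup (Fin (n + 1)) ℂ}
    (hh : InH n h) (t : Fin (n + 1)) :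
    Matrix.mulVecLin (h : Matrix (Fin (n + 1)) (Fin (n + 1)) ℂ) (e n t) =
      ((h : Matrix (Fin (n + 1)) (Fin (n + 1)) ℂ) t t) • e n t := by
  rw [diag_of_InH hh]
  ext s
  simp [Matrix.mulVecLin, e, Matrix.mulVec_single, Matrix.diagonal_apply, Pi.single_apply]

/-- diagonal matrices fix any flag spanned by standard basis vectors -/
lemma act_H_fix {n : ℕ} (u : Fin (n + 1) → Fin (n + 1) → ℂ)
    (hu : ∀ q, ∃ t, u q = e n t)
    (h : Matrix.GeneralLinearGroup (Fin (n + 1)) ℂ) (hh : InH n h) :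
    actFlag n h (flagOf n u) = flagOf n u := by
  funext i
  set M := (h : Matrix (Fin (n + 1)) (Fin (n + 1)) ℂ)
  show (Submodule.span ℂ (u '' {j | j ≤ i})).map M.mulVecLin
      = Submodule.span ℂ (u '' {j | j ≤ i})
  rw [Submodule.map_span]
  apply le_antisymm
  · rw [Submodule.span_le]
    rintro _ ⟨_, ⟨q, hq, rfl⟩, rfl⟩
    obtain ⟨t, ht⟩ := hu q
    rw [ht, mulVecLin_InH_e hh]
    exact Submodule.smul_mem _ _ (Submodule.subset_span ⟨q, hq, ht⟩)
  · show Submodule.span ℂ (u '' {j | j ≤ i}) ≤ _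
    rw [Submodule.span_le]
    rintro _ ⟨q, hq, rfl⟩
    obtain ⟨t, ht⟩ := hu q
    have hne := diagEntries_ne_zero hh t
    have : u q = (M t t)⁻¹ • M.mulVecLin (u q) := by
      rw [ht, mulVecLin_InH_e hh, smul_smul, inv_mul_cancel₀ hne, one_smul]
    rw [this]
    exact Submodule.smul_mem _ _
      (Submodule.subset_span ⟨u q, ⟨q, hq, rfl⟩, rfl⟩)

/- ### coordinate subspaces -/

/-- coordinate subspace -/
def cSub (n : ℕ) (A : Set (Fin (n + 1))) : Submodule ℂ (Fin (n + 1) → ℂ) where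
  carrier := {x | ∀ t, t ∉ A → x t = 0}
  add_mem' := by intro a b ha hb t ht; simp [ha t ht, hb t ht]
  zero_mem' := by intro t ht; rfl
  smul_mem' := by intro c x hx t ht; simp [hx t ht]

lemma mem_cSub {n : ℕ} {A : Set (Fin (n+1))} {x : Fin (n+1) → ℂ} :
    x ∈ cSub n A ↔ ∀ t, t ∉ A → x t = 0 := Iff.rfl

lemma e_mem_cSub_iff {n : ℕ} {A : Set (Fin (n+1))} {t : Fin (n+1)} :
    e n t ∈ cSub n A ↔ t ∈ A := by
  constructor
  · intro h
    by_contra ht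
    have := h t ht
    simp [e] at this
  · intro ht s hs
    have : s ≠ t := fun h => hs (h ▸ ht)
    simp [e, Pi.single_apply, this]

lemma span_e_image (n : ℕ) (A : Set (Fin (n+1))) :
    Submodule.span ℂ (e n '' A) = cSub n A := by
  apply le_antisymm
  · rw [Submodule.span_le]
    rintro _ ⟨t, ht, rfl⟩
    exact e_mem_cSub_iff.2 ht
  · intro x hx
    have hxsum : x = ∑ t : Fin (n+1), x t • e n t := by
      rw [eq_comm]
      have h1 : ∀ t : Fin (n+1), x t • e n t = Pi.single t (x t) := by
        intro t; ext s
        simp only [e, Pi.smul_apply, Pi.single_apply, smul_eq_mul]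
        split <;> simp_all
      simp only [h1]
      exact Finset.univ_sum_single x
    rw [hxsum]
    apply Submodule.sum_mem
    intro t _
    by_cases ht : t ∈ A
    · exact Submodule.smul_mem _ _ (Submodule.subset_span ⟨t, ht, rfl⟩)
    · rw [hx t ht]; simp

lemma finrank_cSub (n : ℕ) (A : Set (Fin (n+1))) [Fintype A] :
    finrank ℂ (cSub n A) = A.toFinset.card := by
  rw [← span_e_image]
  classical
  have hli : LinearIndependent ℂ (fun x : (e n '' A) => (x : Fin (n+1) → ℂ)) :=
    LinearIndepOn.id_image ((e_li n).comp _ Subtype.val_injective)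
  rw [finrank_span_set_eq_card hli]
  rw [Set.toFinset_image]
  rw [Finset.card_image_of_injective _ (e_inj n)]

lemma cSub_inf (n : ℕ) (A B : Set (Fin (n+1))) :
    cSub n A ⊓ cSub n B = cSub n (A ∩ B) := by
  classical
  apply le_antisymm
  · rintro x hx t ht
    obtain ⟨hA, hB⟩ := Submodule.mem_inf.1 hx
    by_cases h : t ∈ A
    · exact hB t (fun hb => ht ⟨h, hb⟩)
    · exact hA t h
  · intro x hx
    exact Submodule.mem_inf.2
      ⟨fun t ht => hx t (fun h => ht h.1), fun t ht => hx t (fun h => ht h.2)⟩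

lemma cSub_injective {n : ℕ} {A B : Set (Fin (n+1))} (h : cSub n A = cSub n B) : A = B := by
  ext t
  constructor
  · intro ht; exact e_mem_cSub_iff.1 (h ▸ e_mem_cSub_iff.2 ht)
  · intro ht; exact e_mem_cSub_iff.1 (h ▸ e_mem_cSub_iff.2 ht : e n t ∈ cSub n A)

/- ### H-fixed submodules are coordinate subspaces -/

/-- the diagonal matrix with entry 2 at `t` and 1 elsewhere, as a GL element -/
def diag2 (n : ℕ) (t : Fin (n + 1)) : Matrix.GeneralLinearGroup (Fin (n + 1)) ℂ where
  val := Matrix.diagonal (fun s => if s = t then (2:ℂ) else 1)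
  inv := Matrix.diagonal (fun s => if s = t then (2:ℂ)⁻¹ else 1)
  val_inv := by
    rw [Matrix.diagonal_mul_diagonal]
    have : (fun s : Fin (n+1) => (if s = t then (2:ℂ) else 1) * (if s = t then (2:ℂ)⁻¹ else 1))
        = fun _ => (1:ℂ) := by funext s; split <;> norm_num
    rw [this, Matrix.diagonal_one]
  inv_val := by
    rw [Matrix.diagonal_mul_diagonal]
    have : (fun s : Fin (n+1) => (if s = t then (2:ℂ)⁻¹ else 1) * (if s = t then (2:ℂ) else 1))
        = fun _ => (1:ℂ) := by funext s; split <;> norm_num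
    rw [this, Matrix.diagonal_one]

lemma diag2_InH (n : ℕ) (t : Fin (n + 1)) : InH n (diag2 n t) := by
  intro r c hrc
  show Matrix.diagonal _ r c = 0
  exact Matrix.diagonal_apply_ne _ hrc

lemma hFixed_eq_cSub {n : ℕ} (W : Submodule ℂ (Fin (n + 1) → ℂ))
    (hW : ∀ h : Matrix.GeneralLinearGroup (Fin (n + 1)) ℂ, InH n h →
      W.map (Matrix.mulVecLin (h : Matrix (Fin (n + 1)) (Fin (n + 1)) ℂ)) = W) :
    W = cSub n {t | e n t ∈ W} := by
  apply le_antisymm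
  · intro x hx
    have key : ∀ t : Fin (n+1), x t ≠ 0 → e n t ∈ W := by
      intro t hxt
      have h1 : Matrix.mulVecLin ((diag2 n t : Matrix.GeneralLinearGroup (Fin (n+1)) ℂ)
          : Matrix (Fin (n + 1)) (Fin (n + 1)) ℂ) x ∈ W := by
        rw [← hW (diag2 n t) (diag2_InH n t)]
        exact ⟨x, hx, rfl⟩
      have h2 : Matrix.mulVecLin ((diag2 n t : Matrix.GeneralLinearGroup (Fin (n+1)) ℂ)
          : Matrix (Fin (n + 1)) (Fin (n + 1)) ℂ) x - x = (Pi.single t (x t) : Fin (n+1) → ℂ) := by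
        ext s
        show Matrix.mulVec (Matrix.diagonal _) x s - x s = _
        rw [Matrix.mulVec_diagonal]
        by_cases hst : s = t
        · subst hst; simp; ring
        · simp [hst, Pi.single_apply]
      have h3 : (Pi.single t (x t) : Fin (n+1) → ℂ) ∈ W := by
        rw [← h2]; exact Submodule.sub_mem W h1 hx
      have h4 : e n t = (x t)⁻¹ • (Pi.single t (x t) : Fin (n+1) → ℂ) := by
        ext s
        simp only [e, Pi.smul_apply, Pi.single_apply, smul_eq_mul]
        split
        · exact (inv_mul_cancel₀ hxt).symm
        · simp
      rw [h4]
      exact Submodule.smul_mem W _ h3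
    -- now x ∈ cSub
    intro t ht
    by_contra hxt
    exact ht (key t hxt)
  · rw [← span_e_image, Submodule.span_le]
    rintro _ ⟨t, ht, rfl⟩
    exact ht

/- ### GL acts by linear equivalences -/

def glEquiv (n : ℕ) (g : Matrix.GeneralLinearGroup (Fin (n + 1)) ℂ) :
    (Fin (n + 1) → ℂ) ≃ₗ[ℂ] (Fin (n + 1) → ℂ) :=
  LinearEquiv.ofLinear
    (Matrix.mulVecLin (g : Matrix (Fin (n + 1)) (Fin (n + 1)) ℂ))
    (Matrix.mulVecLin ((g⁻¹ : Matrix.GeneralLinearGroup (Fin (n + 1)) ℂ) :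
      Matrix (Fin (n + 1)) (Fin (n + 1)) ℂ))
    (by rw [← Matrix.mulVecLin_mul, ← Units.val_mul, mul_inv_cancel, Units.val_one,
          Matrix.mulVecLin_one])
    (by rw [← Matrix.mulVecLin_mul, ← Units.val_mul, inv_mul_cancel, Units.val_one,
          Matrix.mulVecLin_one])

lemma glEquiv_coe (n : ℕ) (g : Matrix.GeneralLinearGroup (Fin (n + 1)) ℂ) :
    (glEquiv n g : (Fin (n + 1) → ℂ) →ₗ[ℂ] (Fin (n + 1) → ℂ)) =
      Matrix.mulVecLin (g : Matrix (Fin (n + 1)) (Fin (n + 1)) ℂ) := rfl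

lemma mulVecLin_gl_injective (n : ℕ) (g : Matrix.GeneralLinearGroup (Fin (n + 1)) ℂ) :
    Function.Injective (Matrix.mulVecLin (g : Matrix (Fin (n + 1)) (Fin (n + 1)) ℂ)) := by
  have := (glEquiv n g).injective
  simpa [glEquiv] using this

lemma finrank_map_gl (n : ℕ) (g : Matrix.GeneralLinearGroup (Fin (n + 1)) ℂ)
    (p : Submodule ℂ (Fin (n + 1) → ℂ)) :
    finrank ℂ (p.map (Matrix.mulVecLin (g : Matrix (Fin (n + 1)) (Fin (n + 1)) ℂ))) =
      finrank ℂ p := by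
  rw [← glEquiv_coe]
  exact LinearEquiv.finrank_map_eq (glEquiv n g) p

/-- the key `B*`-orbit invariant -/
lemma finrank_inf_actFlag (n : ℕ) (g : Matrix.GeneralLinearGroup (Fin (n + 1)) ℂ)
    (hg : InBstar n g) (V : Fin (n + 1) → Submodule ℂ (Fin (n + 1) → ℂ))
    (i q : Fin (n + 1)) :
    finrank ℂ ((actFlag n g V i) ⊓ flagOf n (eStarVec n) q : Submodule ℂ (Fin (n+1) → ℂ)) =
      finrank ℂ ((V i) ⊓ flagOf n (eStarVec n) q : Submodule ℂ (Fin (n+1) → ℂ)) := by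
  have hEq : (flagOf n (eStarVec n) q).map
      (Matrix.mulVecLin (g : Matrix (Fin (n + 1)) (Fin (n + 1)) ℂ)) =
      flagOf n (eStarVec n) q := congrFun hg q
  show finrank ℂ (((V i).map _ ⊓ _ : Submodule ℂ (Fin (n+1) → ℂ))) = _
  conv_lhs => rw [← hEq, ← Submodule.map_inf _ (mulVecLin_gl_injective n g)]
  exact finrank_map_gl n g _

/- ### the flag E* consists of coordinate subspaces -/

def tau (n : ℕ) : Fin (n + 1) → Fin (n + 1) :=
  fun i => Fin.cases (Fin.last n) (fun t => t.castSucc) i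

lemma eStarVec_eq_tau (n : ℕ) (i : Fin (n + 1)) : eStarVec n i = e n (tau n i) := by
  induction i using Fin.cases <;> rfl

lemma tau_injective (n : ℕ) : Function.Injective (tau n) := by
  intro a b hab
  rcases Fin.eq_zero_or_eq_succ a with rfl | ⟨a', rfl⟩ <;>
    rcases Fin.eq_zero_or_eq_succ b with rfl | ⟨b', rfl⟩ <;>
      simp only [tau, Fin.cases_zero, Fin.cases_succ] at hab
  · rfl
  · exact absurd hab ((Fin.castSucc_lt_last b').ne')
  · exact absurd hab ((Fin.castSucc_lt_last a').ne)
  · exact congrArg Fin.succ (Fin.castSucc_injective n hab)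

lemma eStar_cSub (n : ℕ) (q : Fin (n + 1)) :
    flagOf n (eStarVec n) q = cSub n (tau n '' {j | j ≤ q}) := by
  show Submodule.span ℂ (eStarVec n '' {j | j ≤ q}) = _
  rw [← span_e_image]
  congr 1
  rw [← Set.image_comp]
  apply Set.image_congr
  intro a _
  exact eStarVec_eq_tau n a

/- ### determination of a set from its chain intersections -/

lemma inter_singleton_eq_of_ncard {α : Type*} {A B : Set α} {a : α}
    (h : (A ∩ {a}).ncard = (B ∩ {a}).ncard) : A ∩ {a} = B ∩ {a} := by
  rcases Set.subset_singleton_iff_eq.1 (Set.inter_subset_right (s := A)) with h1 | h1 <;>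
    rcases Set.subset_singleton_iff_eq.1 (Set.inter_subset_right (s := B)) with h2 | h2 <;>
      rw [h1, h2] <;> rw [h1, h2] at h <;> simp_all

lemma sets_eq_of_chain {n : ℕ} (S S' : Set (Fin (n + 1)))
    (h : ∀ q : Fin (n + 1),
      (S ∩ tau n '' {j | j ≤ q}).ncard = (S' ∩ tau n '' {j | j ≤ q}).ncard) :
    S = S' := by
  have key : ∀ m : ℕ, ∀ hm : m ≤ n,
      S ∩ tau n '' {j | j ≤ (⟨m, Nat.lt_succ_of_le hm⟩ : Fin (n+1))} =
      S' ∩ tau n '' {j | j ≤ (⟨m, Nat.lt_succ_of_le hm⟩ : Fin (n+1))} := by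
    intro m
    induction m with
    | zero =>
      intro hm
      have h0 : {j : Fin (n+1) | j ≤ (⟨0, Nat.lt_succ_of_le hm⟩ : Fin (n+1))} = {0} := by
        ext j; simp only [Set.mem_setOf_eq, Set.mem_singleton_iff, Fin.le_def, Fin.ext_iff, Fin.val_mk, Fin.val_zero]; omega
      have h1 : tau n '' {j : Fin (n+1) | j ≤ (⟨0, Nat.lt_succ_of_le hm⟩ : Fin (n+1))}
          = {Fin.last n} := by rw [h0, Set.image_singleton]; rfl
      rw [h1]
      exact inter_singleton_eq_of_ncard (by rw [← h1]; exact h _)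
    | succ m ih =>
      intro hm
      have hm' : m ≤ n := Nat.le_of_succ_le hm
      have hIH := ih hm'
      set qm : Fin (n+1) := ⟨m, Nat.lt_succ_of_le hm'⟩
      set qm1 : Fin (n+1) := ⟨m+1, Nat.lt_succ_of_le hm⟩
      have hsplit : {j : Fin (n+1) | j ≤ qm1} = {j : Fin (n+1) | j ≤ qm} ∪ {qm1} := by
        ext j
        simp only [Set.mem_setOf_eq, Set.mem_union, Set.mem_singleton_iff,
          Fin.le_def, Fin.ext_iff, Fin.val_mk]
        have e0 : (qm : ℕ) = m := rfl
        have e1 : (qm1 : ℕ) = m + 1 := rfl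
        omega
      set a := tau n qm1
      have himg : tau n '' {j : Fin (n+1) | j ≤ qm1} =
          (tau n '' {j : Fin (n+1) | j ≤ qm}) ∪ {a} := by
        rw [hsplit, Set.image_union, Set.image_singleton]
      have hanotin : a ∉ tau n '' {j : Fin (n+1) | j ≤ qm} := by
        rintro ⟨b, hb, hba⟩
        have : b = qm1 := tau_injective n hba
        subst this
        simp only [Set.mem_setOf_eq, Fin.le_def, Fin.val_mk] at hb
        have e0 : (qm : ℕ) = m := rfl
        have e1 : (qm1 : ℕ) = m + 1 := rfl
        omega
      set T := tau n '' {j : Fin (n+1) | j ≤ qm}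
      have hTfin : (S ∩ T).Finite := Set.toFinite _
      have hdistS : S ∩ (T ∪ {a}) = (S ∩ T) ∪ (S ∩ {a}) := by
        rw [Set.inter_union_distrib_left]
      have hcard : ∀ X : Set (Fin (n+1)), (X ∩ (T ∪ {a})).ncard =
          (X ∩ T).ncard + (X ∩ {a}).ncard := by
        intro X
        rw [Set.inter_union_distrib_left]
        apply Set.ncard_union_eq
        · exact Set.disjoint_of_subset Set.inter_subset_right Set.inter_subset_right
            (by simpa using hanotin)
        · exact Set.toFinite _
        · exact Set.toFinite _
      have hq := h qm1
      rw [himg, hcard S, hcard S', hIH] at hq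
      have hsingle : S ∩ {a} = S' ∩ {a} :=
        inter_singleton_eq_of_ncard (by omega)
      rw [himg, hdistS, Set.inter_union_distrib_left, hIH, hsingle]
  have hfin := key n le_rfl
  have huniv : {j : Fin (n+1) | j ≤ (⟨n, Nat.lt_succ_of_le le_rfl⟩ : Fin (n+1))} = Set.univ := by
    ext j; simp [Fin.le_def]; omega
  rw [huniv, Set.image_univ, Set.range_eq_univ.2
    (Finite.injective_iff_surjective.1 (tau_injective n)), Set.inter_univ, Set.inter_univ] at hfin
  exact hfin

lemma finrank_cSub_ncard (n : ℕ) (A : Set (Fin (n+1))) :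
    finrank ℂ (cSub n A) = A.ncard := by
  classical
  have : Fintype A := Fintype.ofFinite ↥A
  rw [finrank_cSub n A, ← Set.ncard_eq_toFinset_card']

lemma eStarVec_zero (n : ℕ) : eStarVec n 0 = e n (Fin.last n) := by
  simp [eStarVec]

lemma eStarVec_succ (n : ℕ) (s : Fin n) : eStarVec n s.succ = e n s.castSucc := by
  simp [eStarVec]

theorem statement3' (n : ℕ) (hn : 1 ≤ n) (v vs : Fin (n + 1) → Fin (n + 1) → ℂ)
    (hstd : IsStdForm n v)
    (k : ℕ) (hk : 0 < k) (i j : Fin k → Fin (n + 1)) (p : Fin (n + 1))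
    (hi : StrictAnti i) (hj : StrictMono j)
    (hhat : ∀ m : Fin k, j m ≠ Fin.last n ∧ v (i m) = hatE n (j m))
    (hp : v p = e n (Fin.last n))
    (hrest : ∀ q : Fin (n + 1), (∀ m : Fin k, q ≠ i m) → ∃ t, v q = e n t)
    (hs1 : ∀ m : Fin k, vs (i m) = e n (j m))
    (hs2 : ∀ q : Fin (n + 1), (∀ m : Fin k, q ≠ i m) → vs q = v q) :
    flagOf n vs ∈ orbit n (InBstar n) (flagOf n v) ∧
    (∀ h : Matrix.GeneralLinearGroup (Fin (n + 1)) ℂ, InH n h →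
      actFlag n h (flagOf n vs) = flagOf n vs) ∧
    (∀ W ∈ orbit n (InBstar n) (flagOf n v),
      (∀ h : Matrix.GeneralLinearGroup (Fin (n + 1)) ℂ, InH n h → actFlag n h W = W) →
        W = flagOf n vs) := by
  classical
  -- the unipotent matrix
  set M : Matrix (Fin (n+1)) (Fin (n+1)) ℂ :=
    Matrix.of fun r c => if r = Fin.last n ∧ (∃ m, c = j m) then (1:ℂ) else 0 with hM
  have hMM : M * M = 0 := by
    ext r c
    simp only [Matrix.mul_apply, Matrix.zero_apply]
    apply Finset.sum_eq_zero
    intro s _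
    by_cases h1 : r = Fin.last n ∧ ∃ m, s = j m
    · obtain ⟨m, hm⟩ := h1.2
      have h2 : ¬ (s = Fin.last n ∧ ∃ m', c = j m') := by
        rintro ⟨hcon, -⟩
        exact (hhat m).1 (hm ▸ hcon)
      simp [M, h2]
    · simp [M, h1]
  have hval : (1 - M) * (1 + M) = 1 := by
    have h : (1 - M) * (1 + M) = 1 - M * M := by noncomm_ring
    rw [h, hMM, sub_zero]
  have hval' : (1 + M) * (1 - M) = 1 := by
    have h : (1 + M) * (1 - M) = 1 - M * M := by noncomm_ring
    rw [h, hMM, sub_zero]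
  set g : Matrix.GeneralLinearGroup (Fin (n+1)) ℂ := ⟨1 - M, 1 + M, hval, hval'⟩ with hgdef
  have hgcoe : (g : Matrix (Fin (n+1)) (Fin (n+1)) ℂ) = 1 - M := rfl
  -- action on basis vectors
  have hMe : ∀ t : Fin (n+1), M.mulVecLin (e n t) =
      (if ∃ m, t = j m then e n (Fin.last n) else 0) := by
    intro t
    ext r
    show (M *ᵥ Pi.single t 1) r = _
    rw [Matrix.mulVec_single]
    simp only [mul_one, M, Matrix.of_apply]
    by_cases h1 : ∃ m, t = j m
    · simp only [h1, and_true, if_true]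
      by_cases hr : r = Fin.last n
      · subst hr; simp [e, h1]
      · simp [e, hr, Pi.single_apply]
    · simp [h1]
  have hgapply : ∀ x : Fin (n+1) → ℂ,
      (g : Matrix (Fin (n+1)) (Fin (n+1)) ℂ).mulVecLin x = x - M.mulVecLin x := by
    intro x
    show (1 - M) *ᵥ x = x - M *ᵥ x
    rw [Matrix.sub_mulVec, Matrix.one_mulVec]
  have hge : ∀ t : Fin (n+1), (g : Matrix (Fin (n+1)) (Fin (n+1)) ℂ).mulVecLin (e n t)
      = e n t - (if ∃ m, t = j m then e n (Fin.last n) else 0) := by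
    intro t; rw [hgapply, hMe]
  have hjlast : ∀ t : Fin (n+1), (∃ m, t = j m) → t ≠ Fin.last n := by
    rintro t ⟨m, rfl⟩; exact (hhat m).1
  have hlastnotj : ¬ ∃ m, Fin.last n = j m := fun h => hjlast _ h rfl
  have hglast : (g : Matrix (Fin (n+1)) (Fin (n+1)) ℂ).mulVecLin (e n (Fin.last n))
      = e n (Fin.last n) := by
    rw [hge, if_neg hlastnotj, sub_zero]
  have hghat : ∀ m : Fin k,
      (g : Matrix (Fin (n+1)) (Fin (n+1)) ℂ).mulVecLin (v (i m)) = e n (j m) := by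
    intro m
    rw [(hhat m).2]
    show (g : Matrix (Fin (n+1)) (Fin (n+1)) ℂ).mulVecLin (e n (j m) + e n (Fin.last n)) = _
    rw [map_add, hge, hge, if_pos ⟨m, rfl⟩, if_neg hlastnotj]
    abel
  -- non-hat positions carry basis vectors outside the range of j
  have hnotj : ∀ q : Fin (n+1), (∀ m : Fin k, q ≠ i m) → ∀ t, v q = e n t →
      ¬ ∃ m, t = j m := by
    rintro q hq t hvq ⟨m, rfl⟩
    have hqp : q ≠ p := by
      rintro rfl
      rw [hp] at hvq
      exact (hhat m).1 (e_inj n hvq).symm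
    have hip : i m ≠ p := by
      intro h
      have h2 := (hhat m).2
      rw [h, hp] at h2
      have h3 := congrFun h2 (j m)
      simp only [e, hatE, Pi.add_apply, Pi.single_apply] at h3
      norm_num at h3
    have hiq : i m ≠ q := fun h => hq m h.symm
    set c : Fin (n+1) → ℂ := fun s =>
      (if s = i m then 1 else 0) - (if s = p then 1 else 0) - (if s = q then 1 else 0)
      with hc
    have hsum : ∑ s, c s • v s = 0 := by
      simp only [hc, sub_smul, Finset.sum_sub_distrib, ite_smul, one_smul, zero_smul]
      rw [Finset.sum_ite_eq' Finset.univ (i m) v, Finset.sum_ite_eq' Finset.univ p v,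
        Finset.sum_ite_eq' Finset.univ q v]
      simp only [Finset.mem_univ, if_true]
      rw [(hhat m).2, hp, hvq]
      show e n (j m) + e n (Fin.last n) - e n (Fin.last n) - e n (j m) = 0
      abel
    have hzero := Fintype.linearIndependent_iff.1 hstd.1 c hsum (i m)
    rw [hc] at hzero
    simp only [if_pos rfl, if_neg hip, if_neg hiq] at hzero
    norm_num at hzero
  have hgv : ∀ q : Fin (n+1),
      (g : Matrix (Fin (n+1)) (Fin (n+1)) ℂ).mulVecLin (v q) = vs q := by
    intro q
    by_cases hqh : ∃ m, q = i m
    · obtain ⟨m, rfl⟩ := hqh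
      rw [hghat m, hs1 m]
    · push_neg at hqh
      obtain ⟨t, ht⟩ := hrest q hqh
      rw [hs2 q hqh, ht, hge t, if_neg (hnotj q hqh t ht), sub_zero]
  -- g maps the flag of v to the flag of vs
  have hact : actFlag n g (flagOf n v) = flagOf n vs := by
    funext q
    show (Submodule.span ℂ (v '' {s | s ≤ q})).map _ = Submodule.span ℂ (vs '' {s | s ≤ q})
    rw [Submodule.map_span, ← Set.image_comp]
    congr 1
    apply Set.image_congr
    intro a _
    exact hgv a
  -- g lies in B*
  have hgB : InBstar n g := by
    funext q
    show (Submodule.span ℂ (eStarVec n '' {s | s ≤ q})).map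
        ((g : Matrix (Fin (n+1)) (Fin (n+1)) ℂ).mulVecLin)
      = Submodule.span ℂ (eStarVec n '' {s | s ≤ q})
    rw [Submodule.map_span]
    have h0mem : e n (Fin.last n) ∈ Submodule.span ℂ (eStarVec n '' {s | s ≤ q}) :=
      Submodule.subset_span ⟨0, Fin.zero_le q, eStarVec_zero n⟩
    apply le_antisymm
    · rw [Submodule.span_le]
      rintro _ ⟨_, ⟨s, hs, rfl⟩, rfl⟩
      rcases Fin.eq_zero_or_eq_succ s with rfl | ⟨s', rfl⟩
      · rw [eStarVec_zero, hglast]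
        exact h0mem
      · rw [eStarVec_succ, hge]
        refine Submodule.sub_mem _
          (Submodule.subset_span ⟨s'.succ, hs, eStarVec_succ n s'⟩) ?_
        split_ifs
        · exact h0mem
        · exact Submodule.zero_mem _
    · rw [Submodule.span_le]
      rintro _ ⟨s, hs, rfl⟩
      have h0 : e n (Fin.last n) ∈ Submodule.span ℂ
          ((g : Matrix (Fin (n+1)) (Fin (n+1)) ℂ).mulVecLin ''
            (eStarVec n '' {s | s ≤ q})) := by
        apply Submodule.subset_span
        exact ⟨eStarVec n 0, ⟨0, Fin.zero_le q, rfl⟩, by rw [eStarVec_zero, hglast]⟩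
      rcases Fin.eq_zero_or_eq_succ s with rfl | ⟨s', rfl⟩
      · rw [eStarVec_zero]
        exact h0
      · have hg' : (g : Matrix (Fin (n+1)) (Fin (n+1)) ℂ).mulVecLin (e n s'.castSucc) ∈
            Submodule.span ℂ ((g : Matrix (Fin (n+1)) (Fin (n+1)) ℂ).mulVecLin ''
              (eStarVec n '' {s | s ≤ q})) :=
          Submodule.subset_span ⟨eStarVec n s'.succ, ⟨s'.succ, hs, rfl⟩,
            by rw [eStarVec_succ]⟩
        have hdecomp : e n s'.castSucc =
            (g : Matrix (Fin (n+1)) (Fin (n+1)) ℂ).mulVecLin (e n s'.castSucc) +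
            (if ∃ m, s'.castSucc = j m then e n (Fin.last n) else 0) := by
          rw [hge]; abel
        rw [eStarVec_succ, hdecomp]
        refine Submodule.add_mem _ hg' ?_
        split_ifs
        · exact h0
        · exact Submodule.zero_mem _
  -- all vectors of vs are standard basis vectors
  have hvsbasis : ∀ q, ∃ t, vs q = e n t := by
    intro q
    by_cases hqh : ∃ m, q = i m
    · obtain ⟨m, rfl⟩ := hqh; exact ⟨j m, hs1 m⟩
    · push_neg at hqh
      obtain ⟨t, ht⟩ := hrest q hqh
      exact ⟨t, (hs2 q hqh).trans ht⟩
  have part2 : ∀ h : Matrix.GeneralLinearGroup (Fin (n + 1)) ℂ, InH n h →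
      actFlag n h (flagOf n vs) = flagOf n vs :=
    fun h hh => act_H_fix vs hvsbasis h hh
  refine ⟨⟨g, hgB, hact.symm⟩, part2, ?_⟩
  rintro W ⟨b, hbB, rfl⟩ hWfix
  funext q
  have hW1 : actFlag n b (flagOf n v) q =
      cSub n {t | e n t ∈ actFlag n b (flagOf n v) q} :=
    hFixed_eq_cSub _ (fun h hh => congrFun (hWfix h hh) q)
  have hW2 : flagOf n vs q = cSub n {t | e n t ∈ flagOf n vs q} :=
    hFixed_eq_cSub _ (fun h hh => congrFun (part2 h hh) q)
  have hcard : ∀ r : Fin (n+1),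
      ({t | e n t ∈ actFlag n b (flagOf n v) q} ∩ tau n '' {s | s ≤ r}).ncard =
      ({t | e n t ∈ flagOf n vs q} ∩ tau n '' {s | s ≤ r}).ncard := by
    intro r
    have h1 : finrank ℂ
        ((actFlag n b (flagOf n v) q) ⊓ flagOf n (eStarVec n) r :
          Submodule ℂ (Fin (n+1) → ℂ)) =
        finrank ℂ ((flagOf n vs q) ⊓ flagOf n (eStarVec n) r :
          Submodule ℂ (Fin (n+1) → ℂ)) := by
      rw [finrank_inf_actFlag n b hbB (flagOf n v) q r, ← hact]
      exact (finrank_inf_actFlag n g hgB (flagOf n v) q r).symm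
    rw [hW1, hW2, eStar_cSub, cSub_inf, cSub_inf, finrank_cSub_ncard,
      finrank_cSub_ncard] at h1
    exact h1
  rw [hW1, hW2, sets_eq_of_chain _ _ hcard]

/-- for a standard-form flag `F` with hat vectors, the flag `F*`
(obtained by replacing each hat vector `ê_{j_m}` by `e_{j_m}`) lies in `B*·F`,
is fixed by every invertible diagonal matrix, and is the unique `H`-fixed flag
in `B*·F`. -/
theorem statement3 (n : ℕ) (hn : 1 ≤ n) (v vs : Fin (n + 1) → Fin (n + 1) → ℂ)
    (hstd : IsStdForm n v)
    (k : ℕ) (hk : 0 < k) (i j : Fin k → Fin (n + 1)) (p : Fin (n + 1))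
    (hi : StrictAnti i) (hj : StrictMono j)
    (hhat : ∀ m : Fin k, j m ≠ Fin.last n ∧ v (i m) = hatE n (j m))
    (hp : v p = e n (Fin.last n))
    (hrest : ∀ q : Fin (n + 1), (∀ m : Fin k, q ≠ i m) → ∃ t, v q = e n t)
    (hs1 : ∀ m : Fin k, vs (i m) = e n (j m))
    (hs2 : ∀ q : Fin (n + 1), (∀ m : Fin k, q ≠ i m) → vs q = v q) :
    flagOf n vs ∈ orbit n (InBstar n) (flagOf n v) ∧
    (∀ h : Matrix.GeneralLinearGroup (Fin (n + 1)) ℂ, InH n h →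
      actFlag n h (flagOf n vs) = flagOf n vs) ∧
    (∀ W ∈ orbit n (InBstar n) (flagOf n v),
      (∀ h : Matrix.GeneralLinearGroup (Fin (n + 1)) ℂ, InH n h → actFlag n h W = W) →
        W = flagOf n vs) := by
  exact statement3' n hn v vs hstd k hk i j p hi hj hhat hp hrest hs1 hs2

end ShareshianPairs
end
end

section
/- Let w ∈ S_n, let Δ = {j_1 < j_2 < ⋯ < j_k < n} ∪ {n} be a decreasing sequence for w^{-1}, and set u* = τ_Δ w σ^{-1}. Suppose i ∈ {1,…,n−2} is such that both i and i+1 lie in Δ. Then w^{-1}(i+1) < w^{-1}(i), and (u*)^{-1}(i+1) ≺ (u*)^{-1}(i), where ≺ is the total order on {1,…,n} defined by n ≺ 1 ≺ 2 ≺ ⋯ ≺ n−1. (That is, the simple root ε_i − ε_{i+1} of 𝔤𝔩(n−1) is complex unstable for both w and u*.) -/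
/-
Common setup.  The ambient space is `ℂ^(n+1)` (so the paper's `n` is our `n + 1`,
and the paper's hypothesis `n ≥ 2` becomes `1 ≤ n`).  Coordinates are indexed by
`Fin (n+1)`, zero-indexed, so the paper's index `i ∈ {1, …, n}` is our `i - 1`,
and the paper's `e_n` is `e (Fin.last n)`.
-/

noncomputable section

namespace ShareshianPairs

private theorem aux14 (n : ℕ) (w ustar : Equiv.Perm (Fin (n + 1)))
    (Δ : Finset (Fin (n + 1))) (hΔ : Fin.last n ∈ Δ)
    (hdec : ∀ x ∈ Δ, ∀ y ∈ Δ, x < y → w⁻¹ y < w⁻¹ x)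
    (hu : ustar = ((Δ.sort (· ≤ ·)).formPerm)⁻¹ * w * ((finRotate (n+1))⁻¹)⁻¹)
    (i : Fin (n + 1)) (hi : (i : ℕ) + 1 < n)
    (h1 : i ∈ Δ) (h2 : i + 1 ∈ Δ) :
    w⁻¹ (i + 1) < w⁻¹ i ∧
      finRotate (n+1) (ustar⁻¹ (i + 1)) < finRotate (n+1) (ustar⁻¹ i) := by
  set l := Δ.sort (· ≤ ·) with hl
  have hnd : l.Nodup := Δ.sort_nodup _
  have hsort : l.Pairwise (· < ·) := (Δ.sortedLT_sort).pairwise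
  have gcongr : ∀ a b : ℕ, ∀ ha : a < l.length, ∀ hb : b < l.length, a = b →
      l[a] = l[b] := by rintro a b ha hb rfl; rfl
  have hmono : ∀ a b : ℕ, ∀ ha : a < l.length, ∀ hb : b < l.length, a < b → l[a] < l[b] := by
    rw [List.pairwise_iff_getElem] at hsort
    exact fun a b ha hb hab => hsort a b ha hb hab
  have hival : ((i+1 : Fin (n+1)) : ℕ) = (i:ℕ)+1 := by
    rw [Fin.val_add_one]
    have h : i ≠ Fin.last n := by
      intro h; rw [h] at hi; simp [Fin.last] at hi
    simp [h]
  have hlt1 : i < i + 1 := by rw [Fin.lt_def, hival]; omega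
  have hlast1 : i < Fin.last n := by rw [Fin.lt_def]; simp [Fin.last]; omega
  have hlast2 : i + 1 < Fin.last n := by rw [Fin.lt_def, hival]; simp [Fin.last]; omega
  refine ⟨hdec i h1 (i+1) h2 hlt1, ?_⟩
  have hmi : i ∈ l := (Finset.mem_sort _).2 h1
  have hmlast : Fin.last n ∈ l := (Finset.mem_sort _).2 hΔ
  have hmi1 : i + 1 ∈ l := (Finset.mem_sort _).2 h2
  obtain ⟨k, hk, hki⟩ := List.mem_iff_getElem.1 hmi
  obtain ⟨m, hm, hkm⟩ := List.mem_iff_getElem.1 hmlast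
  obtain ⟨k2, hk2, hki2⟩ := List.mem_iff_getElem.1 hmi1
  have hkm' : k < m := by
    rcases Nat.lt_trichotomy k m with h | h | h
    · exact h
    · exfalso; have := gcongr k m hk hm h; rw [hki, hkm] at this; exact hlast1.ne this
    · exfalso; have := hmono m k hm hk h; rw [hki, hkm] at this; exact hlast1.asymm this
  have hk1 : k + 1 < l.length := lt_of_le_of_lt hkm' hm
  have hkk2 : k < k2 := by
    rcases Nat.lt_trichotomy k k2 with h | h | h
    · exact h
    · exfalso; have := gcongr k k2 hk hk2 h; rw [hki, hki2] at this; exact hlt1.ne this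
    · exfalso; have := hmono k2 k hk2 hk h; rw [hki, hki2] at this; exact hlt1.asymm this
  have heq1 : l[k+1]'hk1 = i + 1 := by
    have hle : l[k+1]'hk1 ≤ i + 1 := by
      rcases Nat.lt_or_ge (k+1) k2 with h | h
      · exact le_of_lt (hki2 ▸ hmono (k+1) k2 hk1 hk2 h)
      · have h' : k + 1 = k2 := Nat.le_antisymm hkk2 h
        rw [gcongr (k+1) k2 hk1 hk2 h', hki2]
    have hgt : i < l[k+1]'hk1 := hki ▸ hmono k (k+1) hk hk1 (Nat.lt_succ_self k)
    rw [Fin.le_def, hival] at hle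
    rw [Fin.lt_def] at hgt
    exact Fin.ext (by omega)
  have hk1m : k + 1 < m := by
    rcases Nat.lt_trichotomy (k+1) m with h | h | h
    · exact h
    · exfalso; have := gcongr (k+1) m hk1 hm h; rw [heq1, hkm] at this; exact hlast2.ne this
    · exfalso; have := hmono m (k+1) hm hk1 h; rw [heq1, hkm] at this; exact hlast2.asymm this
  have hk2' : k + 2 < l.length := lt_of_le_of_lt hk1m hm
  have hf1 : l.formPerm i = i + 1 := by
    conv_lhs => rw [← hki]
    rw [ List.formPerm_apply_getElem _ hnd k hk]
    rw [gcongr _ _ (Nat.mod_lt _ (by omega)) hk1 (Nat.mod_eq_of_lt hk1)]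
    exact heq1
  have hf2 : l.formPerm (i+1) = l[k+2]'hk2' := by
    conv_lhs => rw [← heq1]
    rw [ List.formPerm_apply_getElem _ hnd (k+1) hk1]
    exact gcongr _ _ (Nat.mod_lt _ (by omega)) hk2' (Nat.mod_eq_of_lt hk2')
  have hz : l[k+2]'hk2' ∈ Δ := (Finset.mem_sort (α := Fin (n+1)) (· ≤ ·)).1 (List.getElem_mem _)
  have hzgt : i + 1 < l[k+2]'hk2' := heq1 ▸ hmono (k+1) (k+2) hk1 hk2' (by omega)
  have hcomp : ∀ x, finRotate (n+1) (ustar⁻¹ x) = w⁻¹ (l.formPerm x) := by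
    intro x
    rw [hu]
    simp [mul_inv_rev, Equiv.Perm.mul_apply]
  rw [hcomp, hcomp, hf1, hf2]
  exact hdec (i+1) h2 _ hz hzgt

/-- if both `i` and `i+1` lie in `Δ` (with `i + 1 ≤ n - 1`), then the
simple root `ε_i - ε_{i+1}` of `gl(n-1)` is complex unstable for both `w` and
`u* = τ_Δ w σ⁻¹`: `w⁻¹(i+1) < w⁻¹ i` and `(u*)⁻¹(i+1) ≺ (u*)⁻¹ i`. -/
theorem statement14 (n : ℕ) (hn : 2 ≤ n) (w ustar : Equiv.Perm (Fin (n + 1)))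
    (Δ : Finset (Fin (n + 1))) (hΔ : Fin.last n ∈ Δ)
    (hdec : IsDecreasingFor n Δ w)
    (hu : ustar = tauDelta n Δ * w * (sigma n)⁻¹)
    (i : Fin (n + 1)) (hi : (i : ℕ) + 1 < n)
    (h1 : i ∈ Δ) (h2 : i + 1 ∈ Δ) :
    w⁻¹ (i + 1) < w⁻¹ i ∧ precOrd n (ustar⁻¹ (i + 1)) (ustar⁻¹ i) := by
  exact aux14 n w ustar Δ hΔ hdec hu i hi h1 h2

end ShareshianPairs
end
end
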